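/- Let s ≥ 1 be an integer and A a finite alphabet with |A| ≥ 2. If there exists a nonempty code D ⊆ A^{s+1} with minimum Hamming distance d(D) ≥ 3, then there exists a code C ⊆ A^{s+2} of the same cardinality |C| = |D| that is 1-error correctable for the network N_s. In particular, σ(N_s, |A|) ≥ A_{|A|}(s+1, 3), the maximum size of a |A|-ary code of length s+1 with minimum Hamming distance 3. -/

import Mathlib

open Finset

/-- The "fan" of a codeword `c` under the network code `(F1, F2)` for the network `N_s`:
the set of possible outputs at the terminal when the adversary changes at most one
of the `s+2` symbols sent by the source. -/
def fan {A : Type*} [Fintype A] [DecidableEq A] (s : ℕ)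
    (F1 : A → A) (F2 : (Fin (s + 1) → A) → Fin s → A)
    (c : Fin (s + 2) → A) : Finset (A × (Fin s → A)) :=
  (Finset.univ.filter fun x : Fin (s + 2) → A => hammingDist x c ≤ 1).image
    fun x => (F1 (x 0), F2 fun i => x i.succ)

/-- A code `C ⊆ A^{s+2}` is 1-error correctable for the network `N_s` if there are
functions `F1 : A → A` and `F2 : A^{s+1} → A^s` such that the fans of distinct
codewords are disjoint. -/
def OneErrCorr {A : Type*} [Fintype A] [DecidableEq A] (s : ℕ)
    (C : Finset (Fin (s + 2) → A)) : Prop :=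
  ∃ (F1 : A → A) (F2 : (Fin (s + 1) → A) → Fin s → A),
    ∀ c ∈ C, ∀ c' ∈ C, c ≠ c' → Disjoint (fan s F1 F2 c) (fan s F1 F2 c')

/-- `tau s C c2` is the set of codewords of `C` whose last `s+1` coordinates are at
Hamming distance at most 1 from `c2`. -/
def tau {A : Type*} [Fintype A] [DecidableEq A] (s : ℕ)
    (C : Finset (Fin (s + 2) → A)) (c2 : Fin (s + 1) → A) :
    Finset (Fin (s + 2) → A) :=
  C.filter fun c => hammingDist c2 (fun i => c i.succ) ≤ 1

lemma tail_dist_le {A : Type*} [DecidableEq A] {n : ℕ} (x c : Fin (n + 1) → A) :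
    hammingDist (fun i : Fin n => x i.succ) (fun i => c i.succ) ≤ hammingDist x c := by
  unfold hammingDist
  apply Finset.card_le_card_of_injOn (fun i => i.succ)
  · intro i hi
    simp only [Finset.mem_coe, Finset.mem_filter, Finset.mem_univ, true_and] at hi ⊢
    exact hi
  · intro a _ b _ h
    exact Fin.succ_injective _ h

theorem lower_bound_from_code {A : Type*} [Fintype A] [DecidableEq A]
    (s : ℕ) (hs : 1 ≤ s) (hA : 2 ≤ Fintype.card A)
    (D : Finset (Fin (s + 1) → A)) (hne : D.Nonempty)
    (hd : ∀ x ∈ D, ∀ y ∈ D, x ≠ y → 3 ≤ hammingDist x y) :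
    ∃ C : Finset (Fin (s + 2) → A), C.card = D.card ∧ OneErrCorr s C := by
  classical
  obtain ⟨d₀, hd₀⟩ := hne
  set a₀ : A := d₀ 0 with ha₀
  -- truncation to the first s coordinates
  set tr : (Fin (s + 1) → A) → (Fin s → A) := fun d i => d i.castSucc with htr
  -- tr is injective on D
  have htrinj : ∀ d ∈ D, ∀ d' ∈ D, tr d = tr d' → d = d' := by
    intro d hdm d' hd'm h
    by_contra hne'
    have h3 := hd d hdm d' hd'm hne'
    have hsub : ({i | d i ≠ d' i} : Finset (Fin (s + 1))) ⊆ {Fin.last s} := by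
      intro i hi
      simp only [Finset.mem_filter, Finset.mem_univ, true_and] at hi
      simp only [Finset.mem_singleton]
      by_contra hil
      obtain ⟨j, rfl⟩ := Fin.exists_castSucc_eq.2 hil
      exact hi (congrFun h j)
    have := Finset.card_le_card hsub
    simp only [Finset.card_singleton] at this
    have : hammingDist d d' ≤ 1 := this
    omega
  -- the decoder
  set F2 : (Fin (s + 1) → A) → Fin s → A := fun y =>
    if h : ∃ d ∈ D, hammingDist y d ≤ 1 then tr h.choose else tr y with hF2
  have hF2eq : ∀ y, ∀ d ∈ D, hammingDist y d ≤ 1 → F2 y = tr d := by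
    intro y d hdm hy
    have h : ∃ d ∈ D, hammingDist y d ≤ 1 := ⟨d, hdm, hy⟩
    rw [hF2]
    simp only [h, dif_pos]
    obtain ⟨hcm, hcd⟩ := h.choose_spec
    rcases eq_or_ne h.choose d with heq | hne'
    · rw [heq]
    · have h3 := hd _ hcm _ hdm hne'
      have := hammingDist_triangle_left h.choose d y
      omega
  refine ⟨D.image (fun d => Fin.cons a₀ d), ?_, id, F2, ?_⟩
  · apply Finset.card_image_of_injective
    intro d d' h
    funext i
    have := congrFun h i.succ
    simpa using this
  · intro c hc c' hc' hcc'
    simp only [Finset.mem_image] at hc hc'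
    obtain ⟨d, hdm, rfl⟩ := hc
    obtain ⟨d', hd'm, rfl⟩ := hc'
    have hdd' : d ≠ d' := fun h => hcc' (by rw [h])
    -- every element of the fan of cons a₀ d has second component tr d
    have key : ∀ (d : Fin (s+1) → A), d ∈ D → ∀ p ∈ fan s id F2 (Fin.cons a₀ d),
        p.2 = tr d := by
      intro e hem p hp
      simp only [fan, Finset.mem_image, Finset.mem_filter, Finset.mem_univ, true_and] at hp
      obtain ⟨x, hx, rfl⟩ := hp
      have : hammingDist (fun i => x i.succ) e ≤ 1 := by
        have h1 := tail_dist_le x (Fin.cons a₀ e)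
        simp only [Fin.cons_succ] at h1
        exact h1.trans hx
      exact hF2eq _ e hem this
    rw [Finset.disjoint_left]
    intro p hp hp'
    have h1 := key d hdm p hp
    have h2 := key d' hd'm p hp'
    exact hdd' (htrinj d hdm d' hd'm (h1 ▸ h2 ▸ rfl))
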